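/- Let L be a finite lattice, a ≤ b in L, and let q be a prime interval of L. Then q is collapsed by con_L(a, b) if and only if [a, b] is congruence-projective to q; in fact, if q is collapsed by con_L(a, b), then there is a prime interval p contained in [a, b] such that p ⇛ q. -/

import Mathlib

namespace ForkCongruence

/-- A congruence of a lattice: an equivalence relation compatible with `⊔` and `⊓`. -/
structure LatCon (K : Type*) [Lattice K] where
  rel : K → K → Prop
  refl : ∀ x, rel x x
  symm : ∀ {x y}, rel x y → rel y x
  trans : ∀ {x y z}, rel x y → rel y z → rel x z
  sup_comp : ∀ {a b c d}, rel a b → rel c d → rel (a ⊔ c) (b ⊔ d)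
  inf_comp : ∀ {a b c d}, rel a b → rel c d → rel (a ⊓ c) (b ⊓ d)

namespace LatCon

variable {K : Type*} [Lattice K]

theorem rel_ext {θ ψ : LatCon K} (h : θ.rel = ψ.rel) : θ = ψ := by
  cases θ; cases ψ; cases h; rfl

instance : PartialOrder (LatCon K) where
  le θ ψ := ∀ ⦃x y⦄, θ.rel x y → ψ.rel x y
  le_refl _ _ _ h := h
  le_trans _ _ _ h₁ h₂ _ _ h := h₂ (h₁ h)
  le_antisymm θ ψ h₁ h₂ :=
    rel_ext (by funext x y; exact propext ⟨fun h => h₁ h, fun h => h₂ h⟩)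

/-- The smallest lattice congruence containing a binary relation. -/
def gen (s : K → K → Prop) : LatCon K where
  rel x y := ∀ θ : LatCon K, (∀ a b, s a b → θ.rel a b) → θ.rel x y
  refl x _ _ := LatCon.refl _ x
  symm h θ hs := θ.symm (h θ hs)
  trans h₁ h₂ θ hs := θ.trans (h₁ θ hs) (h₂ θ hs)
  sup_comp h₁ h₂ θ hs := θ.sup_comp (h₁ θ hs) (h₂ θ hs)
  inf_comp h₁ h₂ θ hs := θ.inf_comp (h₁ θ hs) (h₂ θ hs)

instance : SemilatticeSup (LatCon K) where
  sup θ ψ := gen (fun x y => θ.rel x y ∨ ψ.rel x y)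
  le_sup_left θ ψ x y h χ hχ := hχ x y (Or.inl h)
  le_sup_right θ ψ x y h χ hχ := hχ x y (Or.inr h)
  sup_le θ ψ χ h₁ h₂ x y h := h χ (fun a b hab => hab.elim (fun w => h₁ w) (fun w => h₂ w))

instance : SemilatticeInf (LatCon K) where
  inf θ ψ :=
    { rel := fun x y => θ.rel x y ∧ ψ.rel x y
      refl := fun x => ⟨θ.refl x, ψ.refl x⟩
      symm := fun h => ⟨θ.symm h.1, ψ.symm h.2⟩
      trans := fun h₁ h₂ => ⟨θ.trans h₁.1 h₂.1, ψ.trans h₁.2 h₂.2⟩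
      sup_comp := fun h₁ h₂ => ⟨θ.sup_comp h₁.1 h₂.1, ψ.sup_comp h₁.2 h₂.2⟩
      inf_comp := fun h₁ h₂ => ⟨θ.inf_comp h₁.1 h₂.1, ψ.inf_comp h₁.2 h₂.2⟩ }
  inf_le_left _ _ _ _ h := h.1
  inf_le_right _ _ _ _ h := h.2
  le_inf _ _ _ h₁ h₂ _ _ h := ⟨h₁ h, h₂ h⟩

instance : Lattice (LatCon K) :=
  { (inferInstance : SemilatticeSup (LatCon K)),
    (inferInstance : SemilatticeInf (LatCon K)) with }

instance : OrderBot (LatCon K) where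
  bot :=
    { rel := Eq
      refl := fun _ => rfl
      symm := Eq.symm
      trans := Eq.trans
      sup_comp := fun h₁ h₂ => by rw [h₁, h₂]
      inf_comp := fun h₁ h₂ => by rw [h₁, h₂] }
  bot_le θ x y h := h ▸ θ.refl x

/-- The principal congruence `con(a, b)`: the smallest congruence collapsing `a` and `b`. -/
def conOf (a b : K) : LatCon K := gen (fun x y => x = a ∧ y = b)

/-- The restriction of a congruence of `K` to a sublattice `L`. -/
def restrict (θ : LatCon K) (L : Sublattice K) : LatCon L where
  rel x y := θ.rel ↑x ↑y
  refl x := θ.refl ↑x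
  symm h := θ.symm h
  trans h₁ h₂ := θ.trans h₁ h₂
  sup_comp {a b c d} h₁ h₂ := by
    show θ.rel ↑(a ⊔ c) ↑(b ⊔ d)
    rw [Sublattice.coe_sup, Sublattice.coe_sup]
    exact θ.sup_comp h₁ h₂
  inf_comp {a b c d} h₁ h₂ := by
    show θ.rel ↑(a ⊓ c) ↑(b ⊓ d)
    rw [Sublattice.coe_inf, Sublattice.coe_inf]
    exact θ.inf_comp h₁ h₂

/-- A congruence `α` of the sublattice `L` extends to `K` if it is the restriction of some
congruence of `K`. -/
def ExtendsTo {L : Sublattice K} (α : LatCon L) : Prop :=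
  ∃ θ : LatCon K, θ.restrict L = α

/-- The minimal extension of a congruence of a sublattice `L` of `K`: the smallest congruence
of `K` containing it (viewed as a set of pairs). -/
def minExt {L : Sublattice K} (α : LatCon L) : LatCon K :=
  gen (fun x y => ∃ (hx : x ∈ L) (hy : y ∈ L), α.rel ⟨x, hx⟩ ⟨y, hy⟩)

end LatCon

/-- `K` is a congruence-preserving extension of its sublattice `L`: the restriction map is a
bijection from the congruences of `K` onto the congruences of `L`. -/
def IsCongPresExt {K : Type*} [Lattice K] (L : Sublattice K) : Prop :=
  Function.Bijective (fun θ : LatCon K => θ.restrict L)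

/-- A lattice is semimodular if `x ⊓ y ⋖ y` implies `x ⋖ x ⊔ y`. -/
def IsSemimodular (K : Type*) [Lattice K] : Prop :=
  ∀ x y : K, x ⊓ y ⋖ y → x ⋖ x ⊔ y

/-- A lattice is slim if its set of join-irreducible elements contains no three-element
antichain. -/
def IsSlim (K : Type*) [Lattice K] : Prop :=
  ¬ ∃ x y z : K, SupIrred x ∧ SupIrred y ∧ SupIrred z ∧
      ¬x ≤ y ∧ ¬y ≤ x ∧ ¬x ≤ z ∧ ¬z ≤ x ∧ ¬y ≤ z ∧ ¬z ≤ y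

/-- An SPS lattice: slim, planar (which follows from slimness together with semimodularity)
and semimodular. Finiteness is assumed separately as `[Finite K]`. -/
def IsSPS (K : Type*) [Lattice K] : Prop :=
  IsSemimodular K ∧ IsSlim K

/-- A covering square `S = {o, a_l, a_r, i}` of a lattice. -/
structure CovSquare (K : Type*) [Lattice K] where
  o : K
  al : K
  ar : K
  i : K
  al_ne_ar : al ≠ ar
  inf_eq : al ⊓ ar = o
  sup_eq : al ⊔ ar = i
  o_covby_al : o ⋖ al
  o_covby_ar : o ⋖ ar
  al_covby_i : al ⋖ i
  ar_covby_i : ar ⋖ i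

namespace CovSquare

variable {K : Type*} [Lattice K]

/-- A covering square is tight if `a_l` and `a_r` are the only lower covers of `i`. -/
def Tight (S : CovSquare K) : Prop :=
  ∀ x : K, x ⋖ S.i → x = S.al ∨ x = S.ar

/-- A covering square is wide if it is not tight. -/
def Wide (S : CovSquare K) : Prop := ¬ S.Tight

/-- A covering square is distributive if the principal ideal `↓i` is a distributive lattice. -/
def Distributive (S : CovSquare K) : Prop :=
  ∀ x y z : K, x ≤ S.i → y ≤ S.i → z ≤ S.i →
    x ⊓ (y ⊔ z) = (x ⊓ y) ⊔ (x ⊓ z)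

end CovSquare

/-- `K` together with the data below is the fork extension `L[S]` of the sublattice `L` of `K`
at the covering square `S` of `L`. The elements `xl k, yl k, zl k` represent
`x_{l,k+1}, y_{l,k+1}, z_{l,k+1}` of the construction (`0`-based indexing), and similarly
on the right. -/
structure ForkExtension (K : Type*) [Lattice K] (L : Sublattice K) (S : CovSquare L) where
  n : ℕ
  m : ℕ
  npos : 0 < n
  mpos : 0 < m
  t : K
  zl : ℕ → K
  zr : ℕ → K
  xl : ℕ → L
  yl : ℕ → L
  xr : ℕ → L
  yr : ℕ → L
  xl_zero : xl 0 = S.al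
  yl_zero : yl 0 = S.o
  xr_zero : xr 0 = S.ar
  yr_zero : yr 0 = S.o
  -- the successive covering squares `{y_{l,k+1}, x_{l,k+1}, y_{l,k}, x_{l,k}}` in `L`
  xl_succ_covby : ∀ k, k + 1 < n → xl (k + 1) ⋖ xl k
  yl_succ_covby : ∀ k, k + 1 < n → yl (k + 1) ⋖ yl k
  yl_covby_xl : ∀ k, k < n → yl k ⋖ xl k
  xl_succ_ne_yl : ∀ k, k + 1 < n → xl (k + 1) ≠ yl k
  xl_inf_yl : ∀ k, k + 1 < n → xl (k + 1) ⊓ yl k = yl (k + 1)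
  xl_sup_yl : ∀ k, k + 1 < n → xl (k + 1) ⊔ yl k = xl k
  -- `n` is largest possible
  left_max : ¬ ∃ x : L, x ⋖ xl (n - 1) ∧ x ≠ yl (n - 1) ∧
      x ⊓ yl (n - 1) ⋖ x ∧ x ⊓ yl (n - 1) ⋖ yl (n - 1) ∧ x ⊔ yl (n - 1) = xl (n - 1)
  -- the same on the right
  xr_succ_covby : ∀ k, k + 1 < m → xr (k + 1) ⋖ xr k
  yr_succ_covby : ∀ k, k + 1 < m → yr (k + 1) ⋖ yr k
  yr_covby_xr : ∀ k, k < m → yr k ⋖ xr k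
  xr_succ_ne_yr : ∀ k, k + 1 < m → xr (k + 1) ≠ yr k
  xr_inf_yr : ∀ k, k + 1 < m → xr (k + 1) ⊓ yr k = yr (k + 1)
  xr_sup_yr : ∀ k, k + 1 < m → xr (k + 1) ⊔ yr k = xr k
  right_max : ¬ ∃ x : L, x ⋖ xr (m - 1) ∧ x ≠ yr (m - 1) ∧
      x ⊓ yr (m - 1) ⋖ x ∧ x ⊓ yr (m - 1) ⋖ yr (m - 1) ∧ x ⊔ yr (m - 1) = xr (m - 1)
  -- the new elements
  t_not_mem : t ∉ L
  zl_not_mem : ∀ k, k < n → zl k ∉ L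
  zr_not_mem : ∀ k, k < m → zr k ∉ L
  mem_or_new : ∀ x : K, x ∈ L ∨ x = t ∨ (∃ k < n, x = zl k) ∨ (∃ k < m, x = zr k)
  -- `{o, z_{l,1}, z_{r,1}, a_l, a_r, t, i}` is a sublattice isomorphic to `S7`
  zl_sup_zr : zl 0 ⊔ zr 0 = t
  zl_zero_covby_t : zl 0 ⋖ t
  zr_zero_covby_t : zr 0 ⋖ t
  t_covby_i : t ⋖ (S.i : K)
  -- the chains `z_{l,1} ≻ ⋯ ≻ z_{l,n}` and `z_{r,1} ≻ ⋯ ≻ z_{r,m}`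
  zl_succ_covby : ∀ k, k + 1 < n → zl (k + 1) ⋖ zl k
  zr_succ_covby : ∀ k, k + 1 < m → zr (k + 1) ⋖ zr k
  -- `y_{l,k} ⋖ z_{l,k} ⋖ x_{l,k}` in `K`, and similarly on the right
  yl_covby_zl : ∀ k, k < n → (yl k : K) ⋖ zl k
  zl_covby_xl : ∀ k, k < n → zl k ⋖ (xl k : K)
  yr_covby_zr : ∀ k, k < m → (yr k : K) ⋖ zr k
  zr_covby_xr : ∀ k, k < m → zr k ⋖ (xr k : K)

namespace ForkExtension

variable {K : Type*} [Lattice K] {L : Sublattice K} {S : CovSquare L}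

/-- `x_{l,k+1}` is a (left) protrusion: it has at least three lower covers in `L`. -/
def ProtL (F : ForkExtension K L S) (k : ℕ) : Prop :=
  k < F.n ∧ ∃ u v w : L, u ≠ v ∧ u ≠ w ∧ v ≠ w ∧
    u ⋖ F.xl k ∧ v ⋖ F.xl k ∧ w ⋖ F.xl k

/-- `x_{r,k+1}` is a (right) protrusion: it has at least three lower covers in `L`. -/
def ProtR (F : ForkExtension K L S) (k : ℕ) : Prop :=
  k < F.m ∧ ∃ u v w : L, u ≠ v ∧ u ≠ w ∧ v ≠ w ∧
    u ⋖ F.xr k ∧ v ⋖ F.xr k ∧ w ⋖ F.xr k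

end ForkExtension




/-- `(a, b)` is congruence-perspective to `(c, d)`: up-perspective (`a ≤ c` and `b ⊔ c = d`)
or down-perspective (`d ≤ b` and `a ⊓ d = c`). -/
def CPersp {K : Type*} [Lattice K] (p q : K × K) : Prop :=
  (p.1 ≤ q.1 ∧ p.2 ⊔ q.1 = q.2) ∨ (q.2 ≤ p.2 ∧ p.1 ⊓ q.2 = q.1)

/-- `(a, b)` is congruence-projective to `(c, d)`: a finite chain of
congruence-perspectivities leads from `(a, b)` to `(c, d)`. -/
def CProj {K : Type*} [Lattice K] (p q : K × K) : Prop :=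
  Relation.ReflTransGen CPersp p q

section Lemma1Aux

variable {L : Type*} [Lattice L]

private lemma latcon_rel_of_cpersp (θ : LatCon L) {p q : L × L} (h : CPersp p q)
    (hp : θ.rel p.1 p.2) : θ.rel q.1 q.2 := by
  rcases h with ⟨hle, heq⟩ | ⟨hle, heq⟩
  · have := θ.sup_comp hp (θ.refl q.1)
    rwa [sup_eq_right.2 hle, heq] at this
  · have := θ.inf_comp hp (θ.refl q.2)
    rwa [heq, inf_eq_right.2 hle] at this

private lemma latcon_rel_of_cproj (θ : LatCon L) {p q : L × L} (h : CProj p q)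
    (hp : θ.rel p.1 p.2) : θ.rel q.1 q.2 := by
  induction h with
  | refl => exact hp
  | tail _ hstep ih => exact latcon_rel_of_cpersp θ hstep ih

private lemma cpersp_inf {z w : L} (h : z ≤ w) (c : L) : CPersp (z, w) (z ⊓ c, w ⊓ c) :=
  Or.inr ⟨inf_le_left, by rw [← inf_assoc, inf_eq_left.2 h]⟩

private lemma cpersp_sup {z w : L} (h : z ≤ w) (c : L) : CPersp (z, w) (z ⊔ c, w ⊔ c) :=
  Or.inl ⟨le_sup_left, by rw [← sup_assoc, sup_eq_left.2 h]⟩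

private lemma cproj_subinterval {z w p q : L} (hzp : z ≤ p) (hpq : p ≤ q) (hqw : q ≤ w) :
    CProj (z, w) (p, q) := by
  refine Relation.ReflTransGen.head (b := (z ⊓ q, q)) (Or.inr ⟨hqw, rfl⟩) ?_
  exact Relation.ReflTransGen.single
    (Or.inl ⟨le_trans inf_le_left hzp, sup_eq_left.2 hpq⟩)

/-- One step of the chain description: `z ≤ w` and some prime interval of `[a, b]` is
congruence-projective to `(z, w)`. -/
private def PS (a b : L) (z w : L) : Prop :=
  z ≤ w ∧ ∃ p₁ p₂ : L, a ≤ p₁ ∧ p₁ ⋖ p₂ ∧ p₂ ≤ b ∧ CProj (p₁, p₂) (z, w)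

private lemma ps_inf {a b z w : L} (h : PS a b z w) (c : L) : PS a b (z ⊓ c) (w ⊓ c) := by
  obtain ⟨hzw, p₁, p₂, h1, h2, h3, h4⟩ := h
  exact ⟨inf_le_inf_right c hzw, p₁, p₂, h1, h2, h3,
    h4.tail (cpersp_inf hzw c)⟩

private lemma ps_sup {a b z w : L} (h : PS a b z w) (c : L) : PS a b (z ⊔ c) (w ⊔ c) := by
  obtain ⟨hzw, p₁, p₂, h1, h2, h3, h4⟩ := h
  exact ⟨sup_le_sup_right hzw c, p₁, p₂, h1, h2, h3,
    h4.tail (cpersp_sup hzw c)⟩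

private lemma ch_le {a b z w : L} (h : Relation.ReflTransGen (PS a b) z w) : z ≤ w := by
  induction h with
  | refl => exact le_rfl
  | tail _ hstep ih => exact ih.trans hstep.1

private lemma ch_inf {a b z w : L} (h : Relation.ReflTransGen (PS a b) z w) (c : L) :
    Relation.ReflTransGen (PS a b) (z ⊓ c) (w ⊓ c) :=
  Relation.ReflTransGen.lift (· ⊓ c) (fun _ _ hs => ps_inf hs c) _ _ h

private lemma ch_sup {a b z w : L} (h : Relation.ReflTransGen (PS a b) z w) (c : L) :
    Relation.ReflTransGen (PS a b) (z ⊔ c) (w ⊔ c) :=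
  Relation.ReflTransGen.lift (· ⊔ c) (fun _ _ hs => ps_sup hs c) _ _ h

private lemma ch_restrict {a b z w p q : L} (h : Relation.ReflTransGen (PS a b) z w)
    (hzp : z ≤ p) (hpq : p ≤ q) (hqw : q ≤ w) :
    Relation.ReflTransGen (PS a b) p q := by
  have h1 : Relation.ReflTransGen (PS a b) (z ⊔ p) (w ⊔ p) := ch_sup h p
  rw [sup_eq_right.2 hzp, sup_eq_left.2 (hpq.trans hqw)] at h1
  have h2 : Relation.ReflTransGen (PS a b) (p ⊓ q) (w ⊓ q) := ch_inf h1 q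
  rwa [inf_eq_left.2 hpq, inf_eq_right.2 hqw] at h2

private lemma ch_combine_sup {a b m M m' M' : L}
    (h : Relation.ReflTransGen (PS a b) m M) (h' : Relation.ReflTransGen (PS a b) m' M') :
    Relation.ReflTransGen (PS a b) (m ⊔ m') (M ⊔ M') := by
  have c1 : Relation.ReflTransGen (PS a b) (m ⊔ m') (M ⊔ m') := ch_sup h m'
  have c2 : Relation.ReflTransGen (PS a b) (m' ⊔ M) (M' ⊔ M) := ch_sup h' M
  rw [sup_comm m' M, sup_comm M' M] at c2
  exact c1.trans c2

private lemma ch_combine_inf {a b m M m' M' : L}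
    (h : Relation.ReflTransGen (PS a b) m M) (h' : Relation.ReflTransGen (PS a b) m' M') :
    Relation.ReflTransGen (PS a b) (m ⊓ m') (M ⊓ M') := by
  have c1 : Relation.ReflTransGen (PS a b) (m ⊓ m') (M ⊓ m') := ch_inf h m'
  have c2 : Relation.ReflTransGen (PS a b) (m' ⊓ M) (M' ⊓ M) := ch_inf h' M
  rw [inf_comm m' M, inf_comm M' M] at c2
  exact c1.trans c2

private lemma ch_combine_full {a b m M m' M' : L}
    (h : Relation.ReflTransGen (PS a b) m M) (h' : Relation.ReflTransGen (PS a b) m' M')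
    (hmid : m ⊔ m' ≤ M ⊓ M') :
    Relation.ReflTransGen (PS a b) (m ⊓ m') (M ⊔ M') := by
  have c1 : Relation.ReflTransGen (PS a b) (m ⊓ m') (M ⊓ M') := ch_combine_inf h h'
  have c2 : Relation.ReflTransGen (PS a b) (m ⊔ m') (M ⊔ M') := ch_combine_sup h h'
  exact c1.trans (ch_restrict c2 hmid inf_le_sup le_rfl)

/-- The chain congruence: `x ≡ y` iff there is an ascending chain from `x ⊓ y` to `x ⊔ y`
whose steps are congruence-projective images of prime intervals of `[a, b]`. -/
private def psi (a b : L) : LatCon L where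
  rel x y := Relation.ReflTransGen (PS a b) (x ⊓ y) (x ⊔ y)
  refl x := by
    show Relation.ReflTransGen (PS a b) (x ⊓ x) (x ⊔ x)
    rw [inf_idem, sup_idem]
  symm {x y} h := by
    show Relation.ReflTransGen (PS a b) (y ⊓ x) (y ⊔ x)
    rw [inf_comm y x, sup_comm y x]
    exact h
  trans {x y z} h₁ h₂ := by
    have hmid : (x ⊓ y) ⊔ (y ⊓ z) ≤ (x ⊔ y) ⊓ (y ⊔ z) :=
      sup_le (le_inf inf_le_sup (le_trans inf_le_right le_sup_left))
        (le_inf (le_trans inf_le_left le_sup_right) inf_le_sup)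
    have h3 := ch_combine_full h₁ h₂ hmid
    exact ch_restrict h3
      (le_inf (inf_le_of_left_le inf_le_left) (inf_le_of_right_le inf_le_right))
      inf_le_sup
      (sup_le (le_sup_of_le_left le_sup_left) (le_sup_of_le_right le_sup_right))
  sup_comp {x y c d} h₁ h₂ := by
    have h3 := ch_combine_sup h₁ h₂
    exact ch_restrict h3
      (sup_le
        (le_inf (inf_le_of_left_le le_sup_left) (inf_le_of_right_le le_sup_left))
        (le_inf (inf_le_of_left_le le_sup_right) (inf_le_of_right_le le_sup_right)))
      inf_le_sup
      (sup_le (sup_le (le_sup_of_le_left le_sup_left) (le_sup_of_le_right le_sup_left))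
        (sup_le (le_sup_of_le_left le_sup_right) (le_sup_of_le_right le_sup_right)))
  inf_comp {x y c d} h₁ h₂ := by
    have h3 := ch_combine_inf h₁ h₂
    exact ch_restrict h3
      (le_inf
        (le_inf (inf_le_of_left_le inf_le_left) (inf_le_of_right_le inf_le_left))
        (le_inf (inf_le_of_left_le inf_le_right) (inf_le_of_right_le inf_le_right)))
      inf_le_sup
      (sup_le
        (le_inf (inf_le_of_left_le le_sup_left) (inf_le_of_right_le le_sup_left))
        (le_inf (inf_le_of_left_le le_sup_right) (inf_le_of_right_le le_sup_right)))

private lemma ch_self [Finite L] {a b : L} (hab : a ≤ b) :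
    Relation.ReflTransGen (PS a b) a b := by
  have H : ∀ x : L, a ≤ x → x ≤ b → Relation.ReflTransGen (PS a b) x b := by
    have wf : WellFounded ((· > ·) : L → L → Prop) := Finite.to_wellFoundedGT.wf
    intro x
    induction x using wf.induction with
    | _ x ih =>
      intro hax hxb
      rcases eq_or_lt_of_le hxb with rfl | hlt
      · exact Relation.ReflTransGen.refl
      · obtain ⟨c, hc, hcb⟩ := exists_covBy_le_of_lt hlt
        exact Relation.ReflTransGen.head
          ⟨hc.le, x, c, hax, hc, hcb, Relation.ReflTransGen.refl⟩
          (ih c hc.lt (hax.trans hc.le) hcb)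
  exact H a le_rfl hab

private lemma ch_extract {a b u v : L} (huv : u ⋖ v)
    (h : Relation.ReflTransGen (PS a b) u v) : PS a b u v := by
  have key : ∀ x : L, Relation.ReflTransGen (PS a b) x v → u ≤ x → x ≠ v → PS a b u v := by
    intro x h
    induction h using Relation.ReflTransGen.head_induction_on with
    | refl => exact fun _ hne => absurd rfl hne
    | @head x y hstep hrest ih =>
      intro hux hxv
      have hxle : x ≤ v := hstep.1.trans (ch_le hrest)
      have hxv' : x < v := lt_of_le_of_ne hxle hxv
      have hxu : x = u := by
        rcases eq_or_lt_of_le hux with h' | h'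
        · exact h'.symm
        · exact absurd hxv' (huv.2 h')
      subst hxu
      rcases eq_or_ne y v with rfl | hyv
      · exact hstep
      · exact ih (hstep.1) hyv
  exact key u h le_rfl huv.ne

end Lemma1Aux

/-- **Lemma 1.** Let `L` be a finite lattice, `a ≤ b` in `L`, and let `q = [u, v]` be a prime
interval. Then `q` is collapsed by `con(a, b)` iff `[a, b]` is congruence-projective to `q`;
moreover, in that case there is a prime interval `p = [p₁, p₂]` contained in `[a, b]` with
`p ⇛ q`. -/
theorem prime_interval_collapsed_iff_cproj
    {L : Type*} [Lattice L] [Finite L] {a b u v : L} (hab : a ≤ b) (huv : u ⋖ v) :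
    ((LatCon.conOf a b).rel u v ↔ CProj (a, b) (u, v)) ∧
      ((LatCon.conOf a b).rel u v →
        ∃ p₁ p₂ : L, a ≤ p₁ ∧ p₁ ⋖ p₂ ∧ p₂ ≤ b ∧ CProj (p₁, p₂) (u, v)) := by
  have hforward : (LatCon.conOf a b).rel u v →
      ∃ p₁ p₂ : L, a ≤ p₁ ∧ p₁ ⋖ p₂ ∧ p₂ ≤ b ∧ CProj (p₁, p₂) (u, v) := by
    intro h
    have hpsi : (psi a b).rel u v := by
      refine h (psi a b) ?_
      rintro x y ⟨rfl, rfl⟩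
      show Relation.ReflTransGen (PS x y) (x ⊓ y) (x ⊔ y)
      rw [inf_eq_left.2 hab, sup_eq_right.2 hab]
      exact ch_self hab
    have hch : Relation.ReflTransGen (PS a b) u v := by
      have : Relation.ReflTransGen (PS a b) (u ⊓ v) (u ⊔ v) := hpsi
      rwa [inf_eq_left.2 huv.le, sup_eq_right.2 huv.le] at this
    obtain ⟨-, p₁, p₂, h1, h2, h3, h4⟩ := ch_extract huv hch
    exact ⟨p₁, p₂, h1, h2, h3, h4⟩
  refine ⟨⟨fun h => ?_, fun h => ?_⟩, hforward⟩
  · obtain ⟨p₁, p₂, h1, h2, h3, h4⟩ := hforward h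
    exact (cproj_subinterval h1 h2.le h3).trans h4
  · intro θ hθ
    exact latcon_rel_of_cproj θ h (hθ a b ⟨rfl, rfl⟩)

end ForkCongruence
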